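/- For fixed a > 0 and x > a, the 2π-periodic function t ↦ a/(x − √(x² − a²)·cos t) has Fourier expansion ∑_{n ∈ ℤ} ((x − a)/(x + a))^{|n|/2} e^{int}; equivalently, its n-th Fourier coefficient (1/2π)∫₀^{2π} a·e^{−int}/(x − √(x² − a²) cos t) dt equals ((x−a)/(x+a))^{|n|/2}. -/

import Mathlib

open Complex

lemma key_orth (m : ℤ) : ∫ t in (0:ℝ)..(2*Real.pi), Complex.exp ((m:ℂ) * Complex.I * t)
    = if m = 0 then (2*Real.pi:ℂ) else 0 := by
  rcases eq_or_ne m 0 with h | h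
  · simp [h]
  · rw [if_neg h, integral_exp_mul_complex (by simp [h, Complex.I_ne_zero])]
    have : Complex.exp ((m:ℂ) * Complex.I * (2*Real.pi)) = 1 := by
      rw [show (m:ℂ) * Complex.I * (2*Real.pi) = (m:ℤ) * (2*Real.pi*Complex.I) by ring]
      exact Complex.exp_int_mul_two_pi_mul_I m
    simp [this]

lemma key_alg (r xc ac w v : ℂ) (hww : w * v = 1) (hr2 : r ^ 2 * (xc + ac) = xc - ac)
    (h1 : 1 - r * w ≠ 0) (h2 : 1 - r * v ≠ 0)
    (hD : xc - r * (xc + ac) * ((w + v) / 2) ≠ 0) :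
    ac / (xc - r * (xc + ac) * ((w + v) / 2)) = (1 - r * w)⁻¹ + (1 - r * v)⁻¹ * (r * v) := by
  rw [inv_eq_one_div, inv_eq_one_div, div_mul_eq_mul_div, one_mul,
    div_add_div _ _ h1 h2, div_eq_div_iff hD (mul_ne_zero h1 h2)]
  linear_combination (1 - r*(w+v)/2) * hr2 +
    ((xc-ac) + (r^2*(xc+ac)-(xc-ac)) - r*(w+v)*(xc-ac)/2 - r*(w+v)*(r^2*(xc+ac)-(xc-ac))/2) * hww

theorem fourier_coeff_poisson_kernel (x a : ℝ) (ha : 0 < a) (hx : a < x) (n : ℤ) :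
    (1 / (2 * Real.pi) : ℂ) * ∫ t in (0:ℝ)..(2 * Real.pi),
        (a : ℂ) * Complex.exp (-(n : ℂ) * Complex.I * t) /
          ((x : ℂ) - (Real.sqrt (x ^ 2 - a ^ 2) : ℝ) * (Real.cos t : ℝ))
      = (((x - a) / (x + a)) ^ ((|n| : ℝ) / 2) : ℝ) := by
  set r : ℝ := Real.sqrt ((x-a)/(x+a)) with hrdef
  have hxa : (0:ℝ) < x + a := by linarith
  have hxa' : (0:ℝ) < x - a := by linarith
  have hr0 : 0 < r := Real.sqrt_pos.2 (by positivity)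
  have hr1 : r < 1 := by
    rw [hrdef, show (1:ℝ) = Real.sqrt 1 by simp]
    exact Real.sqrt_lt_sqrt (by positivity) (by rw [div_lt_one hxa]; linarith)
  have hr2 : r^2 * (x + a) = x - a := by
    rw [hrdef, Real.sq_sqrt (by positivity)]; field_simp
  have hr2c : (r:ℂ)^2 * ((x:ℂ) + (a:ℂ)) = (x:ℂ) - (a:ℂ) := by exact_mod_cast congrArg Complex.ofReal hr2
  have hb : Real.sqrt (x ^ 2 - a ^ 2) = r * (x + a) := by
    rw [show x^2 - a^2 = (r*(x+a))^2 by linear_combination (-(x+a))*hr2]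
    exact Real.sqrt_sq (by positivity)
  have hww : ∀ t : ℝ, Complex.exp (Complex.I * t) * Complex.exp (-(Complex.I * t)) = 1 := by
    intro t; rw [← Complex.exp_add]; simp
  have habs : ∀ t : ℝ, ‖Complex.exp (Complex.I * t)‖ = 1 := by
    intro t; rw [Complex.norm_exp]; simp
  have habs' : ∀ t : ℝ, ‖Complex.exp (-(Complex.I * t))‖ = 1 := by
    intro t; rw [Complex.norm_exp]; simp
  have hnorm : ∀ t : ℝ, ‖(r:ℂ) * Complex.exp (Complex.I * t)‖ = r := by
    intro t
    rw [norm_mul, habs t, mul_one, Complex.norm_real,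
      Real.norm_of_nonneg hr0.le]
  have hnorm' : ∀ t : ℝ, ‖(r:ℂ) * Complex.exp (-(Complex.I * t))‖ = r := by
    intro t
    rw [norm_mul, habs' t, mul_one, Complex.norm_real,
      Real.norm_of_nonneg hr0.le]
  have hw1 : ∀ t : ℝ, (1 : ℂ) - (r:ℂ) * Complex.exp (Complex.I * t) ≠ 0 := by
    intro t h
    have h2 : ‖(r:ℂ) * Complex.exp (Complex.I * t)‖ = 1 := by
      rw [show (r:ℂ) * Complex.exp (Complex.I * t) = 1 from by linear_combination -h]; simp
    rw [hnorm t] at h2; linarith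
  have hw1' : ∀ t : ℝ, (1 : ℂ) - (r:ℂ) * Complex.exp (-(Complex.I * t)) ≠ 0 := by
    intro t h
    have h2 : ‖(r:ℂ) * Complex.exp (-(Complex.I * t))‖ = 1 := by
      rw [show (r:ℂ) * Complex.exp (-(Complex.I * t)) = 1 from by linear_combination -h]; simp
    rw [hnorm' t] at h2; linarith
  have hdenR : ∀ t : ℝ, 0 < x - Real.sqrt (x^2 - a^2) * Real.cos t := by
    intro t
    have h1 : Real.sqrt (x^2 - a^2) * Real.cos t ≤ Real.sqrt (x^2-a^2) * 1 :=
      mul_le_mul_of_nonneg_left (Real.cos_le_one t) (Real.sqrt_nonneg _)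
    have h2 : Real.sqrt (x^2-a^2) < x := by
      have := Real.sq_sqrt (show (0:ℝ) ≤ x^2 - a^2 by nlinarith)
      nlinarith [Real.sqrt_nonneg (x^2 - a^2)]
    nlinarith
  have heq : ∀ t : ℝ, ((x : ℂ) - (Real.sqrt (x ^ 2 - a ^ 2) : ℝ) * (Real.cos t : ℝ))
      = (x : ℂ) - (r:ℂ) * ((x:ℂ)+(a:ℂ)) *
          ((Complex.exp (Complex.I*t) + Complex.exp (-(Complex.I*t)))/2) := by
    intro t
    rw [hb, Complex.ofReal_cos, Complex.cos]; push_cast; ring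
  have hden : ∀ t : ℝ,
      (x : ℂ) - (r:ℂ) * ((x:ℂ)+(a:ℂ)) *
        ((Complex.exp (Complex.I*t) + Complex.exp (-(Complex.I*t)))/2) ≠ 0 := by
    intro t h
    rw [← heq t] at h
    have : ((x - Real.sqrt (x^2-a^2) * Real.cos t : ℝ) : ℂ) = 0 := by
      push_cast at h ⊢; linear_combination h
    rw [Complex.ofReal_eq_zero] at this
    exact (hdenR t).ne' this
  have hfteq : ∀ t : ℝ,
      (a : ℂ) * Complex.exp (-(n : ℂ) * Complex.I * t) /
          ((x : ℂ) - (Real.sqrt (x ^ 2 - a ^ 2) : ℝ) * (Real.cos t : ℝ))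
      = Complex.exp (-(n : ℂ) * Complex.I * t) *
          ((1 - (r:ℂ) * Complex.exp (Complex.I * t))⁻¹
            + (1 - (r:ℂ) * Complex.exp (-(Complex.I * t)))⁻¹ * ((r:ℂ) * Complex.exp (-(Complex.I * t)))) := by
    intro t
    rw [mul_comm (a:ℂ), mul_div_assoc, heq t,
      key_alg (r:ℂ) x a _ _ (hww t) hr2c (hw1 t) (hw1' t) (hden t)]
  set F : ℕ → ℝ → ℂ := fun k t => Complex.exp (-(n:ℂ) * Complex.I * t) *
      (((r:ℂ) * Complex.exp (Complex.I * t))^k + ((r:ℂ) * Complex.exp (-(Complex.I * t)))^(k+1)) with hF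
  have hFsum : ∀ t : ℝ, HasSum (fun k => F k t)
      ((a : ℂ) * Complex.exp (-(n : ℂ) * Complex.I * t) /
          ((x : ℂ) - (Real.sqrt (x ^ 2 - a ^ 2) : ℝ) * (Real.cos t : ℝ))) := by
    intro t
    rw [hfteq t]
    have h1 : HasSum (fun k : ℕ => ((r:ℂ) * Complex.exp (Complex.I * t))^k)
        (1 - (r:ℂ) * Complex.exp (Complex.I * t))⁻¹ :=
      hasSum_geometric_of_norm_lt_one (by rw [hnorm t]; exact hr1)
    have hlt : ‖(r:ℂ) * Complex.exp (-(Complex.I * t))‖ < 1 := by rw [hnorm' t]; exact hr1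
    have h2 : HasSum (fun k : ℕ => ((r:ℂ) * Complex.exp (-(Complex.I * t)))^(k+1))
        ((1 - (r:ℂ) * Complex.exp (-(Complex.I * t)))⁻¹ * ((r:ℂ) * Complex.exp (-(Complex.I * t)))) := by
      have := (hasSum_geometric_of_norm_lt_one hlt).mul_right
        ((r:ℂ) * Complex.exp (-(Complex.I * t)))
      simpa [pow_succ] using this
    exact (h1.add h2).mul_left _
  have hFnorm : ∀ k : ℕ, ∀ t : ℝ, ‖F k t‖ ≤ r^k + r^(k+1) := by
    intro k t
    rw [hF]
    simp only
    rw [norm_mul, Complex.norm_exp]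
    have hre : (-(n:ℂ) * Complex.I * t).re = 0 := by simp
    rw [hre, Real.exp_zero, one_mul]
    calc ‖((r:ℂ) * Complex.exp (Complex.I * t))^k + ((r:ℂ) * Complex.exp (-(Complex.I * t)))^(k+1)‖
        ≤ ‖((r:ℂ) * Complex.exp (Complex.I * t))^k‖ + ‖((r:ℂ) * Complex.exp (-(Complex.I * t)))^(k+1)‖ :=
          norm_add_le _ _
      _ = r^k + r^(k+1) := by rw [norm_pow, norm_pow, hnorm t, hnorm' t]
  have hFcont : ∀ k : ℕ, Continuous (F k) := by
    intro k; rw [hF]; fun_prop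
  have hFint : ∀ k : ℕ, MeasureTheory.Integrable (F k)
      (MeasureTheory.volume.restrict (Set.Ioc (0:ℝ) (2*Real.pi))) := fun k =>
    (hFcont k).integrableOn_Ioc
  have hpi : (0:ℝ) ≤ 2 * Real.pi := by positivity
  have hFnormint : ∀ k : ℕ,
      (∫ t in Set.Ioc (0:ℝ) (2*Real.pi), ‖F k t‖) ≤ (r^k + r^(k+1)) * (2*Real.pi) := by
    intro k
    calc (∫ t in Set.Ioc (0:ℝ) (2*Real.pi), ‖F k t‖)
        ≤ ∫ _t in Set.Ioc (0:ℝ) (2*Real.pi), (r^k + r^(k+1)) :=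
          MeasureTheory.integral_mono (hFint k).norm (MeasureTheory.integrable_const _)
            (fun t => hFnorm k t)
      _ = (r^k + r^(k+1)) * (2*Real.pi) := by
          rw [MeasureTheory.setIntegral_const, smul_eq_mul, MeasureTheory.measureReal_def, Real.volume_Ioc,
            ENNReal.toReal_ofReal (by linarith), mul_comm]
          ring_nf
  have hsummable : Summable fun k : ℕ => ∫ t in Set.Ioc (0:ℝ) (2*Real.pi), ‖F k t‖ := by
    apply Summable.of_nonneg_of_le
      (fun k => MeasureTheory.integral_nonneg (fun t => norm_nonneg _)) hFnormint
    exact ((summable_geometric_of_lt_one hr0.le hr1).add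
      ((summable_geometric_of_lt_one hr0.le hr1).mul_left r |>.congr
        (fun k => by rw [pow_succ, mul_comm]))).mul_right _
  have hinterchange : (∫ t in (0:ℝ)..(2*Real.pi),
      (a : ℂ) * Complex.exp (-(n : ℂ) * Complex.I * t) /
          ((x : ℂ) - (Real.sqrt (x ^ 2 - a ^ 2) : ℝ) * (Real.cos t : ℝ)))
      = ∑' k : ℕ, ∫ t in Set.Ioc (0:ℝ) (2*Real.pi), F k t := by
    rw [intervalIntegral.integral_of_le hpi]
    rw [MeasureTheory.integral_tsum_of_summable_integral_norm hFint hsummable]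
    apply MeasureTheory.integral_congr_ae
    filter_upwards with t
    exact ((hFsum t).tsum_eq).symm
  have hFval : ∀ k : ℕ, (∫ t in Set.Ioc (0:ℝ) (2*Real.pi), F k t)
      = (r:ℂ)^k * (if ((k:ℤ) - n) = 0 then (2*Real.pi:ℂ) else 0)
        + (r:ℂ)^(k+1) * (if (-(k:ℤ)-1-n) = 0 then (2*Real.pi:ℂ) else 0) := by
    intro k
    rw [← intervalIntegral.integral_of_le hpi]
    have hptwise : ∀ t : ℝ, F k t
        = (r:ℂ)^k * Complex.exp ((((k:ℤ)-n : ℤ):ℂ) * Complex.I * t)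
          + (r:ℂ)^(k+1) * Complex.exp (((-(k:ℤ)-1-n : ℤ):ℂ) * Complex.I * t) := by
      intro t
      rw [hF]
      simp only
      calc Complex.exp (-(n:ℂ) * Complex.I * t) *
            (((r:ℂ) * Complex.exp (Complex.I * t))^k + ((r:ℂ) * Complex.exp (-(Complex.I * t)))^(k+1))
          = (r:ℂ)^k * (Complex.exp ((k:ℕ) * (Complex.I * t)) * Complex.exp (-(n:ℂ) * Complex.I * t))
            + (r:ℂ)^(k+1) * (Complex.exp (((k:ℕ)+1) * (-(Complex.I * t))) * Complex.exp (-(n:ℂ) * Complex.I * t)) := by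
            rw [mul_pow, mul_pow, ← Complex.exp_nat_mul, ← Complex.exp_nat_mul]
            push_cast
            ring
        _ = (r:ℂ)^k * Complex.exp ((((k:ℤ)-n : ℤ):ℂ) * Complex.I * t)
            + (r:ℂ)^(k+1) * Complex.exp (((-(k:ℤ)-1-n : ℤ):ℂ) * Complex.I * t) := by
            rw [← Complex.exp_add, ← Complex.exp_add]
            push_cast
            ring_nf
    rw [intervalIntegral.integral_congr (fun t _ => hptwise t),
      intervalIntegral.integral_add (((by fun_prop : Continuous fun t : ℝ =>
          (r:ℂ)^k * Complex.exp ((((k:ℤ)-n : ℤ):ℂ) * Complex.I * t))).intervalIntegrable _ _)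
        (((by fun_prop : Continuous fun t : ℝ =>
          (r:ℂ)^(k+1) * Complex.exp (((-(k:ℤ)-1-n : ℤ):ℂ) * Complex.I * t))).intervalIntegrable _ _),
      intervalIntegral.integral_const_mul, intervalIntegral.integral_const_mul,
      key_orth, key_orth]
  have hsum_eval : (∑' k : ℕ, ((r:ℂ)^k * (if ((k:ℤ) - n) = 0 then (2*Real.pi:ℂ) else 0)
        + (r:ℂ)^(k+1) * (if (-(k:ℤ)-1-n) = 0 then (2*Real.pi:ℂ) else 0)))
      = (2*Real.pi:ℂ) * (r:ℂ)^(|n|.toNat) := by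
    rcases le_or_gt 0 n with hn | hn
    · rw [tsum_eq_single n.toNat (fun k hk => by
        rw [if_neg (by omega), if_neg (by omega), mul_zero, mul_zero, add_zero])]
      rw [if_pos (by omega), if_neg (by omega), mul_zero, add_zero,
        show |n|.toNat = n.toNat by rw [abs_of_nonneg hn]]
      ring
    · rw [tsum_eq_single (-n-1).toNat (fun k hk => by
        rw [if_neg (by omega), if_neg (by omega), mul_zero, mul_zero, add_zero])]
      rw [if_neg (by omega), if_pos (by omega), mul_zero, zero_add,
        show (-n-1).toNat + 1 = |n|.toNat by rw [abs_of_neg hn]; omega]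
      ring
  rw [hinterchange, tsum_congr hFval, hsum_eval]
  have hR : ((x - a) / (x + a)) ^ ((|n| : ℝ) / 2) = r ^ (|n|.toNat) := by
    have hc : (0:ℝ) < (x-a)/(x+a) := by positivity
    rw [hrdef, Real.sqrt_eq_rpow,
      show ((|n|:ℝ)/2) = (1/(2:ℝ)) * ((|n|.toNat : ℕ) : ℝ) by
        rw [show ((|n|.toNat : ℕ) : ℝ) = ((|n| : ℤ) : ℝ) by
          norm_cast; exact Int.toNat_of_nonneg (abs_nonneg n)]
        rw [Int.cast_abs]
        ring,
      Real.rpow_mul hc.le, Real.rpow_natCast]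
  rw [hR]
  have hpi0 : (2*Real.pi : ℂ) ≠ 0 := by
    simp [Real.pi_ne_zero]
  push_cast
  field_simp
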